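/- Let α > 0 and β ≠ 0 be real. The quadratic polynomial p(σ) = σ² − ((α + 1)β² + δ)/(αβ²) · σ + δ/(αβ²) has two distinct real strictly positive roots if and only if δ > 0. -/
import Mathlib


/-- The quadratic `p(σ) = σ² − ((α+1)β² + δ)/(αβ²) σ + δ/(αβ²)` has two
distinct real strictly positive roots if and only if `δ > 0` (linear stability criterion). -/
theorem linear_stability_iff_delta_pos (α β : ℝ) (hα : 0 < α) (hβ : β ≠ 0) (δ : ℝ) :
    (∃ σ₁ σ₂ : ℝ, σ₁ ≠ σ₂ ∧ 0 < σ₁ ∧ 0 < σ₂ ∧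
      σ₁ ^ 2 - ((α + 1) * β ^ 2 + δ) / (α * β ^ 2) * σ₁ + δ / (α * β ^ 2) = 0 ∧
      σ₂ ^ 2 - ((α + 1) * β ^ 2 + δ) / (α * β ^ 2) * σ₂ + δ / (α * β ^ 2) = 0)
    ↔ 0 < δ := by
  have hβ2 : (0:ℝ) < β ^ 2 := by positivity
  have hk : (0:ℝ) < α * β ^ 2 := by positivity
  have hk' : α * β ^ 2 ≠ 0 := ne_of_gt hk
  set b : ℝ := ((α + 1) * β ^ 2 + δ) / (α * β ^ 2) with hb
  set c : ℝ := δ / (α * β ^ 2) with hc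
  constructor
  · rintro ⟨σ₁, σ₂, hne, h1, h2, e1, e2⟩
    -- from the two equations, σ₁ + σ₂ = b and σ₁ σ₂ = c
    have hsum : σ₁ + σ₂ = b := by
      have hd : (σ₁ - σ₂) * (σ₁ + σ₂ - b) = 0 := by linear_combination e1 - e2
      rcases mul_eq_zero.mp hd with h | h
      · exact absurd (sub_eq_zero.mp h) hne
      · linarith [sub_eq_zero.mp h]
    have hprod : σ₁ * σ₂ = c := by linear_combination -e1 + σ₁ * hsum
    have hcpos : 0 < c := hprod ▸ mul_pos h1 h2
    have := (div_pos_iff.mp hcpos)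
    rcases this with ⟨h, _⟩ | ⟨_, h⟩
    · exact h
    · linarith
  · intro hδ
    have hcpos : 0 < c := div_pos hδ hk
    have hbpos : 0 < b := div_pos (by nlinarith) hk
    set D : ℝ := b ^ 2 - 4 * c with hD
    have hDpos : 0 < D := by
      have key : D * (α * β ^ 2) ^ 2 = ((α - 1) * β ^ 2 - δ) ^ 2 + 4 * α * (β ^ 2) ^ 2 := by
        rw [hD, hb, hc]; field_simp; ring
      nlinarith [sq_nonneg ((α - 1) * β ^ 2 - δ), sq_nonneg (α * β ^ 2)]
    set s : ℝ := Real.sqrt D with hs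
    have hs2 : s ^ 2 = D := Real.sq_sqrt hDpos.le
    have hspos : 0 < s := Real.sqrt_pos.mpr hDpos
    have hsb : s < b := by nlinarith
    refine ⟨(b + s) / 2, (b - s) / 2, ?_, by linarith, by linarith, ?_, ?_⟩
    · intro h; nlinarith
    · nlinarith
    · nlinarith
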